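/- arXiv:1512.00820 — 2 statements merged into one kernel-verified Lean document; each statement's English description precedes it below -/
import Mathlib

section
/- Suppose x_n, x : [0,1] → ℝ are bounded Riemann-integrable functions, x has at most countably many discontinuities, and for every subinterval [t_1, t_2] whose endpoints are continuity points of x one has sup_{[t_1,t_2]} x_n → sup_{[t_1,t_2]} x and inf_{[t_1,t_2]} x_n → inf_{[t_1,t_2]} x. Then ∫_0^1 x_n(t) dt → ∫_0^1 x(t) dt. -/
open Filter Set MeasureTheory intervalIntegral
open Filter Set MeasureTheory

lemma aux_dense (D : Set ℝ) (hD : D.Countable) (a b : ℝ) (hab : a < b) :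
    ∃ c ∈ Set.Ioo a b, c ∉ D := by
  have h1 : ¬ (Set.Ioo a b).Countable := by
    rw [← Cardinal.le_aleph0_iff_set_countable, Cardinal.mk_Ioo_real hab]
    exact fun h => (Cardinal.aleph0_lt_continuum.2 h).elim
  have h2 : ¬ (Set.Ioo a b ⊆ D) := fun h => h1 (hD.mono h)
  rcases Set.not_subset.1 h2 with ⟨c, hc, hcD⟩
  exact ⟨c, hc, hcD⟩
open Filter Set MeasureTheory intervalIntegral

lemma aux_integral_le (f : ℝ → ℝ) (C : ℝ) (hf : ∀ t ∈ Icc (0:ℝ) 1, |f t| ≤ C)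
    (hfi : IntervalIntegrable f volume 0 1) (m : ℕ) (q : ℕ → ℝ)
    (hq0 : 0 < q 0) (hq1 : q m ≤ 1) (hmono : ∀ i < m, q i < q (i+1)) :
    ∫ t in (0:ℝ)..1, f t ≤ C * q 0 + C * (1 - q m)
      + ∑ i ∈ Finset.range m, (q (i+1) - q i) * sSup (f '' Icc (q i) (q (i+1))) := by
  have hmle : ∀ j, j ≤ m → ∀ i, i ≤ j → q i ≤ q j := by
    intro j
    induction j with
    | zero => intro _ i hi; simp [Nat.le_zero.1 hi]
    | succ k ih =>
      intro hk i hi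
      rcases Nat.lt_succ_iff_lt_or_eq.1 (Nat.lt_succ_of_le hi) with h | h
      · exact le_trans (ih (le_trans (Nat.le_succ k) hk) i (Nat.lt_succ_iff.1 h))
          (le_of_lt (hmono k (Nat.lt_of_succ_le hk)))
      · simp [h]

  have hrange : ∀ i, i ≤ m → q i ∈ Icc (0:ℝ) 1 :=
    fun i hi => ⟨le_of_lt (lt_of_lt_of_le hq0 (hmle i hi 0 (Nat.zero_le i))),
      le_trans (hmle m le_rfl i hi) hq1⟩
  have hIsub : ∀ i j, i ≤ m → j ≤ m → uIcc (q i) (q j) ⊆ uIcc (0:ℝ) 1 := by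
    intro i j hi hj
    rw [Set.uIcc_of_le (zero_le_one)]
    exact Set.uIcc_subset_Icc (hrange i hi) (hrange j hj)
  have hint : ∀ i j, i ≤ m → j ≤ m → IntervalIntegrable f volume (q i) (q j) :=
    fun i j hi hj => hfi.mono_set (hIsub i j hi hj)
  have hint0 : ∀ i, i ≤ m → IntervalIntegrable f volume 0 (q i) := by
    intro i hi
    apply hfi.mono_set
    rw [Set.uIcc_of_le (zero_le_one)]
    exact Set.uIcc_subset_Icc ⟨le_rfl, zero_le_one⟩ (hrange i hi)
  have hint1 : ∀ i, i ≤ m → IntervalIntegrable f volume (q i) 1 := by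
    intro i hi
    apply hfi.mono_set
    rw [Set.uIcc_of_le (zero_le_one)]
    exact Set.uIcc_subset_Icc (hrange i hi) ⟨zero_le_one, le_rfl⟩
  have hsplit : ∫ t in (0:ℝ)..1, f t = (∫ t in (0:ℝ)..(q 0), f t)
      + (∫ t in (q 0)..(q m), f t) + (∫ t in (q m)..(1:ℝ), f t) := by
    rw [integral_add_adjacent_intervals (hint0 0 (Nat.zero_le m)) (hint 0 m (Nat.zero_le m) le_rfl),
      integral_add_adjacent_intervals (hint0 m le_rfl) (hint1 m le_rfl)]
  have hsum : (∫ t in (q 0)..(q m), f t)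
      = ∑ i ∈ Finset.range m, ∫ t in (q i)..(q (i+1)), f t := by
    rw [intervalIntegral.sum_integral_adjacent_intervals
      (fun k hk => hint k (k+1) (le_of_lt hk) (Nat.succ_le_of_lt hk))]
  have hterm : ∀ i, i < m → (∫ t in (q i)..(q (i+1)), f t)
      ≤ (q (i+1) - q i) * sSup (f '' Icc (q i) (q (i+1))) := by
    intro i hi
    have hii : Icc (q i) (q (i+1)) ⊆ Icc (0:ℝ) 1 :=
      Icc_subset_Icc (hrange i (le_of_lt hi)).1 (hrange (i+1) (Nat.succ_le_of_lt hi)).2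
    have hbdd : BddAbove (f '' Icc (q i) (q (i+1))) :=
      ⟨C, fun y ⟨t, ht, hty⟩ => hty ▸ le_trans (le_abs_self _) (hf t (hii ht))⟩
    have hle : ∀ t ∈ Icc (q i) (q (i+1)), f t ≤ sSup (f '' Icc (q i) (q (i+1))) :=
      fun t ht => le_csSup hbdd (Set.mem_image_of_mem f ht)
    calc (∫ t in (q i)..(q (i+1)), f t)
        ≤ ∫ _ in (q i)..(q (i+1)), sSup (f '' Icc (q i) (q (i+1))) :=
          integral_mono_on (le_of_lt (hmono i hi)) (hint i (i+1) (le_of_lt hi) (Nat.succ_le_of_lt hi))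
            (intervalIntegrable_const) hle
      _ = (q (i+1) - q i) * sSup (f '' Icc (q i) (q (i+1))) := by
          rw [intervalIntegral.integral_const, smul_eq_mul]
  have he0 : (∫ t in (0:ℝ)..(q 0), f t) ≤ C * q 0 := by
    have := intervalIntegral.norm_integral_le_of_norm_le_const (C := C) (f := f)
      (a := 0) (b := q 0) ?_
    · rw [Real.norm_eq_abs] at this
      calc (∫ t in (0:ℝ)..(q 0), f t) ≤ |∫ t in (0:ℝ)..(q 0), f t| := le_abs_self _
        _ ≤ C * |q 0 - 0| := this
        _ = C * q 0 := by rw [sub_zero, abs_of_pos hq0]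
    · intro t ht
      rw [Set.uIoc_of_le (le_of_lt hq0)] at ht
      exact hf t ⟨le_of_lt ht.1, le_trans ht.2 (hrange 0 (Nat.zero_le m)).2⟩
  have he1 : (∫ t in (q m)..(1:ℝ), f t) ≤ C * (1 - q m) := by
    have := intervalIntegral.norm_integral_le_of_norm_le_const (C := C) (f := f)
      (a := q m) (b := 1) ?_
    · rw [Real.norm_eq_abs] at this
      calc (∫ t in (q m)..(1:ℝ), f t) ≤ |∫ t in (q m)..(1:ℝ), f t| := le_abs_self _
        _ ≤ C * |1 - q m| := this
        _ = C * (1 - q m) := by rw [abs_of_nonneg (by linarith)]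
    · intro t ht
      rw [Set.uIoc_of_le hq1] at ht
      exact hf t ⟨le_trans (hrange m le_rfl).1 (le_of_lt ht.1), ht.2⟩
  rw [hsplit, hsum]
  have := Finset.sum_le_sum (fun i hi => hterm i (Finset.mem_range.1 hi))
  linarith
open Filter Set MeasureTheory intervalIntegral

noncomputable def auxS (x : ℝ → ℝ) (p : ℕ → ℕ → ℝ) (m i : ℕ) : ℝ :=
  sSup (x '' Set.Icc (p m i) (p m (i+1)))

noncomputable def auxg (x : ℝ → ℝ) (p : ℕ → ℕ → ℝ) (m : ℕ) (t : ℝ) : ℝ :=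
  Set.indicator (Set.Iio (p m 0)) x t + Set.indicator (Set.Ici (p m m)) x t +
  ∑ i ∈ Finset.range m, Set.indicator (Set.Ico (p m i) (p m (i+1))) (fun _ => auxS x p m i) t

variable {x : ℝ → ℝ} {p : ℕ → ℕ → ℝ}

def pgood (p : ℕ → ℕ → ℝ) : Prop :=
  ∀ m i : ℕ, p m i ∈ Set.Ioo ((i:ℝ)/((m:ℝ)+1)) (((i:ℝ)+1)/((m:ℝ)+1))

lemma pgood.mono (hp : pgood p) (m : ℕ) : StrictMono (p m) := by
  apply strictMono_nat_of_lt_succ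
  intro i
  have h1 := (hp m i).2
  have h2 := (hp m (i+1)).1
  push_cast at h2
  linarith

lemma pgood.pos (hp : pgood p) (m i : ℕ) : 0 < p m i := by
  have h1 := (hp m i).1
  have : (0:ℝ) ≤ (i:ℝ)/((m:ℝ)+1) := by positivity
  linarith

lemma pgood.lt_one (hp : pgood p) {m i : ℕ} (hi : i ≤ m) : p m i < 1 := by
  have h1 := (hp m i).2
  have h2 : ((i:ℝ)+1)/((m:ℝ)+1) ≤ 1 := by
    rw [div_le_one (by positivity)]
    have : (i:ℝ) ≤ (m:ℝ) := Nat.cast_le.2 hi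
    linarith
  linarith

lemma pgood.icc_sub (hp : pgood p) {m i : ℕ} (hi : i + 1 ≤ m) :
    Set.Icc (p m i) (p m (i+1)) ⊆ Set.Icc (0:ℝ) 1 :=
  Set.Icc_subset_Icc (le_of_lt (hp.pos m i)) (le_of_lt (hp.lt_one hi))

lemma pgood.len (hp : pgood p) (m i : ℕ) : p m (i+1) - p m i < 2/((m:ℝ)+1) := by
  have h1 := (hp m i).1
  have h2 := (hp m (i+1)).2
  push_cast at h2
  have hm : (0:ℝ) < (m:ℝ)+1 := by positivity
  have he : ((i:ℝ)+1+1)/((m:ℝ)+1) - (i:ℝ)/((m:ℝ)+1) = 2/((m:ℝ)+1) := by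
    field_simp; ring
  linarith

lemma auxg_eval_lt (hp : pgood p) {m : ℕ} {t : ℝ} (ht : t < p m 0) :
    auxg x p m t = x t := by
  unfold auxg
  rw [Set.indicator_of_mem (by exact ht) x,
    Set.indicator_of_notMem (by simp only [Set.mem_Ici, not_le]; exact lt_of_lt_of_le ht ((hp.mono m).monotone (Nat.zero_le m)))]
  rw [Finset.sum_eq_zero, add_zero, add_zero]
  intro i _
  apply Set.indicator_of_notMem
  simp only [Set.mem_Ico, not_and, not_lt]
  intro h
  exact absurd (lt_of_lt_of_le ht ((hp.mono m).monotone (Nat.zero_le i))) (not_lt.2 h)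

lemma auxg_eval_ge (hp : pgood p) {m : ℕ} {t : ℝ} (ht : p m m ≤ t) :
    auxg x p m t = x t := by
  unfold auxg
  rw [Set.indicator_of_notMem (s := Set.Iio (p m 0))
      (by simp only [Set.mem_Iio, not_lt]; exact le_trans ((hp.mono m).monotone (Nat.zero_le m)) ht),
    Set.indicator_of_mem (by exact ht) x]
  rw [Finset.sum_eq_zero, add_zero, zero_add]
  intro i hi
  apply Set.indicator_of_notMem
  simp only [Set.mem_Ico, not_and, not_lt]
  intro _
  exact le_trans ((hp.mono m).monotone (Nat.succ_le_of_lt (Finset.mem_range.1 hi))) ht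

lemma auxg_eval_mid (hp : pgood p) {m : ℕ} {t : ℝ} (h0 : p m 0 ≤ t) (h1 : t < p m m) :
    ∃ i, i < m ∧ p m i ≤ t ∧ t < p m (i+1) ∧ auxg x p m t = auxS x p m i := by
  classical
  set P : ℕ → Prop := fun i => p m i ≤ t with hP
  set i₀ := Nat.findGreatest P m with hi₀
  have hP0 : P 0 := h0
  have hspec : P i₀ := Nat.findGreatest_spec (Nat.zero_le m) hP0
  have hle : i₀ ≤ m := Nat.findGreatest_le m
  have hne : i₀ ≠ m := by
    intro h
    rw [h] at hspec
    exact absurd h1 (not_lt.2 hspec)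
  have hilt : i₀ < m := lt_of_le_of_ne hle hne
  have hgt : t < p m (i₀+1) := by
    have := Nat.findGreatest_is_greatest (Nat.lt_succ_self i₀) (Nat.succ_le_of_lt hilt)
    exact not_le.1 this
  refine ⟨i₀, hilt, hspec, hgt, ?_⟩
  unfold auxg
  rw [Set.indicator_of_notMem (by simp only [Set.mem_Iio, not_lt]; exact h0),
    Set.indicator_of_notMem (by simp only [Set.mem_Ici, not_le]; exact h1)]
  rw [zero_add, zero_add]
  rw [Finset.sum_eq_single_of_mem i₀ (Finset.mem_range.2 hilt)]
  · exact Set.indicator_of_mem (Set.mem_Ico.mpr ⟨hspec, hgt⟩) _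
  · intro j _ hj
    apply Set.indicator_of_notMem
    simp only [Set.mem_Ico, not_and, not_lt]
    rcases lt_or_gt_of_ne hj with h | h
    · intro _
      exact le_trans ((hp.mono m).monotone (Nat.succ_le_of_lt h)) hspec
    · intro hjle
      exact absurd (le_trans ((hp.mono m).monotone (Nat.succ_le_of_lt h)) hjle) (not_le.2 hgt)

lemma auxS_abs_le {C : ℝ} (hp : pgood p) (hxbdd : ∀ t ∈ Icc (0:ℝ) 1, |x t| ≤ C)
    {m i : ℕ} (hi : i + 1 ≤ m) : |auxS x p m i| ≤ C := by
  have hsub := hp.icc_sub hi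
  have hne : (x '' Icc (p m i) (p m (i+1))).Nonempty :=
    ⟨x (p m i), Set.mem_image_of_mem _ (Set.left_mem_Icc.2 ((hp.mono m).monotone (Nat.le_succ i)))⟩
  have hbddA : BddAbove (x '' Icc (p m i) (p m (i+1))) :=
    ⟨C, fun y ⟨s, hs, hy⟩ => hy ▸ (abs_le.1 (hxbdd s (hsub hs))).2⟩
  rw [abs_le]
  constructor
  · exact le_trans (abs_le.1 (hxbdd (p m i) (hsub (Set.left_mem_Icc.2 ((hp.mono m).monotone (Nat.le_succ i)))))).1
      (le_csSup hbddA (Set.mem_image_of_mem _ (Set.left_mem_Icc.2 ((hp.mono m).monotone (Nat.le_succ i)))))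
  · exact csSup_le hne (fun y ⟨s, hs, hy⟩ => hy ▸ (abs_le.1 (hxbdd s (hsub hs))).2)

lemma aux_darboux (x : ℝ → ℝ) (C : ℝ) (hxbdd : ∀ t ∈ Icc (0:ℝ) 1, |x t| ≤ C)
    (hxint : IntervalIntegrable x volume 0 1)
    (hcount : Set.Countable {t ∈ Set.Icc (0 : ℝ) 1 | ¬ContinuousAt x t})
    (p : ℕ → ℕ → ℝ) (hp : pgood p) :
    Tendsto (fun m => ∑ i ∈ Finset.range m, (p m (i+1) - p m i) * auxS x p m i) atTop
      (nhds (∫ t in (0:ℝ)..1, x t)) := by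
  classical
  set μ := volume.restrict (Set.Ioc (0:ℝ) 1) with hμ
  haveI : IsFiniteMeasure μ := ⟨by
    rw [hμ, Measure.restrict_apply_univ, Real.volume_Ioc]
    exact ENNReal.ofReal_lt_top⟩
  have hC : 0 ≤ C := le_trans (abs_nonneg _) (hxbdd 0 ⟨le_rfl, zero_le_one⟩)
  have hxI : Integrable x μ := hxint.1
  have hI1 : ∀ m, Integrable (Set.indicator (Set.Iio (p m 0)) x) μ :=
    fun m => hxI.indicator measurableSet_Iio
  have hI2 : ∀ m, Integrable (Set.indicator (Set.Ici (p m m)) x) μ :=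
    fun m => hxI.indicator measurableSet_Ici
  have hI3 : ∀ m i, Integrable (Set.indicator (Set.Ico (p m i) (p m (i+1))) (fun _ => auxS x p m i)) μ :=
    fun m i => (integrable_const _).indicator measurableSet_Ico
  have hgI : ∀ m, Integrable (auxg x p m) μ := fun m =>
    (((hI1 m).add (hI2 m)).add (integrable_finset_sum _ fun i _ => hI3 m i))
  -- uniform bound
  have hbound : ∀ m, ∀ᵐ t ∂μ, ‖auxg x p m t‖ ≤ C := by
    intro m
    filter_upwards [ae_restrict_mem measurableSet_Ioc] with t ht
    rw [Real.norm_eq_abs]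
    rcases lt_or_ge t (p m 0) with h | h
    · rw [auxg_eval_lt hp h]; exact hxbdd t ⟨ht.1.le, ht.2⟩
    rcases lt_or_ge t (p m m) with h' | h'
    · obtain ⟨i, hi, _, _, heq⟩ := auxg_eval_mid hp h h'
      rw [heq]; exact auxS_abs_le hp hxbdd (Nat.succ_le_of_lt hi)
    · rw [auxg_eval_ge hp h']; exact hxbdd t ⟨ht.1.le, ht.2⟩
  -- pointwise convergence a.e.
  have hptw : ∀ᵐ t ∂μ, Tendsto (fun m => auxg x p m t) atTop (nhds (x t)) := by
    have hN : volume ({1} ∪ {t ∈ Set.Icc (0 : ℝ) 1 | ¬ContinuousAt x t} : Set ℝ) = 0 :=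
      measure_union_null (measure_singleton 1) (hcount.measure_zero _)
    have hae := ae_restrict_of_ae (s := Set.Ioc (0:ℝ) 1) (measure_eq_zero_iff_ae_notMem.1 hN)
    filter_upwards [hae, ae_restrict_mem measurableSet_Ioc] with t htN htI
    have ht1 : t < 1 := lt_of_le_of_ne htI.2 (fun h => htN (Or.inl (by simp [h])))
    have hcont : ContinuousAt x t := by
      by_contra h
      exact htN (Or.inr ⟨⟨htI.1.le, htI.2⟩, h⟩)
    rw [Metric.tendsto_atTop]
    intro ε hε
    obtain ⟨δ, hδ, hδ2⟩ := Metric.continuousAt_iff.1 hcont (ε/2) (by linarith)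
    set η := min δ (min t (1 - t)) with hηdef
    have hηpos : 0 < η := lt_min hδ (lt_min htI.1 (by linarith))
    have hηδ : η ≤ δ := min_le_left _ _
    have hηt : η ≤ t := le_trans (min_le_right _ _) (min_le_left _ _)
    have hη1t : η ≤ 1 - t := le_trans (min_le_right _ _) (min_le_right _ _)
    obtain ⟨M, hM⟩ := exists_nat_gt (2/η)
    refine ⟨M, fun m hm => ?_⟩
    have hmM : (M:ℝ) ≤ (m:ℝ) := Nat.cast_le.2 hm
    have h2 : (2:ℝ)/η < (m:ℝ)+1 := by linarith
    have hm1 : 2/((m:ℝ)+1) < η := by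
      rw [div_lt_iff₀ (by positivity : (0:ℝ) < (m:ℝ)+1)]
      have := (div_lt_iff₀ hηpos).1 h2
      linarith
    have hp0t : p m 0 < t := by
      have := (hp m 0).2
      simp only [Nat.cast_zero] at this
      have h1 : ((0:ℝ)+1)/((m:ℝ)+1) ≤ 2/((m:ℝ)+1) := by
        apply div_le_div_of_nonneg_right _ (by positivity)
        · linarith
      linarith
    have hpmt : t < p m m := by
      have h1 := (hp m m).1
      have h2 : (m:ℝ)/((m:ℝ)+1) = 1 - 1/((m:ℝ)+1) := by field_simp; ring
      have h3 : 1/((m:ℝ)+1) ≤ 2/((m:ℝ)+1) := by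
        apply div_le_div_of_nonneg_right _ (by positivity)
        · linarith
      linarith
    obtain ⟨i, hi, hle, hlt, heq⟩ := auxg_eval_mid hp hp0t.le hpmt
    rw [heq, Real.dist_eq]
    have hsub := hp.icc_sub (Nat.succ_le_of_lt hi)
    have hbddA : BddAbove (x '' Icc (p m i) (p m (i+1))) :=
      ⟨C, fun y ⟨s, hs, hy⟩ => hy ▸ (abs_le.1 (hxbdd s (hsub hs))).2⟩
    have hlow : x t ≤ auxS x p m i :=
      le_csSup hbddA (Set.mem_image_of_mem _ ⟨hle, hlt.le⟩)
    have hlen := hp.len m i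
    have hup : auxS x p m i ≤ x t + ε/2 := by
      apply csSup_le ⟨x (p m i), Set.mem_image_of_mem _ (Set.left_mem_Icc.2 ((hp.mono m).monotone (Nat.le_succ i)))⟩
      rintro y ⟨s, hs, rfl⟩
      have hd : dist s t < δ := by
        rw [Real.dist_eq, abs_sub_lt_iff]
        constructor <;> [linarith [hs.1, hs.2]; linarith [hs.1, hs.2]]
      have := hδ2 hd
      rw [Real.dist_eq, abs_sub_lt_iff] at this
      linarith [this.1]
    rw [abs_of_nonneg (by linarith)]
    linarith
  have hdct := MeasureTheory.tendsto_integral_of_dominated_convergence (μ := μ)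
    (F := fun m => auxg x p m) (f := x) (fun _ => C)
    (fun m => (hgI m).aestronglyMeasurable) (integrable_const C) hbound hptw
  -- boundary integrals
  set E1 : ℕ → ℝ := fun m => ∫ t, Set.indicator (Set.Iio (p m 0)) x t ∂μ with hE1def
  set E2 : ℕ → ℝ := fun m => ∫ t, Set.indicator (Set.Ici (p m m)) x t ∂μ with hE2def
  have hgint : ∀ m, (∫ t, auxg x p m t ∂μ)
      = E1 m + E2 m + ∑ i ∈ Finset.range m, (p m (i+1) - p m i) * auxS x p m i := by
    intro m
    unfold auxg
    have hadd : Integrable (fun t => Set.indicator (Set.Iio (p m 0)) x t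
        + Set.indicator (Set.Ici (p m m)) x t) μ := (hI1 m).add (hI2 m)
    have hsumI : Integrable (fun t => ∑ i ∈ Finset.range m,
        Set.indicator (Set.Ico (p m i) (p m (i+1))) (fun _ => auxS x p m i) t) μ :=
      integrable_finset_sum _ fun i _ => hI3 m i
    rw [integral_add hadd hsumI, integral_add (hI1 m) (hI2 m),
      integral_finset_sum _ (fun i _ => hI3 m i)]
    congr 1
    apply Finset.sum_congr rfl
    intro i hi
    have hi' : i + 1 ≤ m := Finset.mem_range.1 hi
    rw [MeasureTheory.integral_indicator measurableSet_Ico, setIntegral_const, smul_eq_mul]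
    congr 1
    rw [hμ, measureReal_def, Measure.restrict_apply measurableSet_Ico]
    have hss : Set.Ico (p m i) (p m (i+1)) ∩ Set.Ioc (0:ℝ) 1 = Set.Ico (p m i) (p m (i+1)) := by
      apply Set.inter_eq_self_of_subset_left
      intro t ht
      exact ⟨lt_of_lt_of_le (hp.pos m i) ht.1, le_of_lt (lt_of_lt_of_le ht.2 (hp.lt_one hi').le)⟩
    rw [hss, Real.volume_Ico, ENNReal.toReal_ofReal (sub_nonneg.2 ((hp.mono m).monotone (Nat.le_succ i)))]
  have hE1b : ∀ m, ‖E1 m‖ ≤ C/((m:ℝ)+1) := by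
    intro m
    have hs1 : Set.Iio (p m 0) ∩ Set.Ioc (0:ℝ) 1 = Set.Ioo 0 (p m 0) := by
      ext t
      constructor
      · rintro ⟨h1, h2, _⟩; exact ⟨h2, h1⟩
      · rintro ⟨h1, h2⟩; exact ⟨h2, h1, le_of_lt (lt_trans h2 (hp.lt_one (Nat.zero_le m)))⟩
    have heq : E1 m = ∫ t, x t ∂(volume.restrict (Set.Ioo 0 (p m 0))) := by
      rw [hE1def]
      simp only
      rw [MeasureTheory.integral_indicator measurableSet_Iio, hμ,
        Measure.restrict_restrict measurableSet_Iio, hs1]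
    rw [heq]
    haveI : IsFiniteMeasure (volume.restrict (Set.Ioo (0:ℝ) (p m 0))) := ⟨by
      rw [Measure.restrict_apply_univ, Real.volume_Ioo]
      exact ENNReal.ofReal_lt_top⟩
    have hb : ∀ᵐ t ∂(volume.restrict (Set.Ioo (0:ℝ) (p m 0))), ‖x t‖ ≤ C := by
      filter_upwards [ae_restrict_mem measurableSet_Ioo] with t ht
      exact hxbdd t ⟨ht.1.le, le_of_lt (lt_trans ht.2 (hp.lt_one (Nat.zero_le m)))⟩
    have := MeasureTheory.norm_integral_le_of_norm_le_const hb
    rw [measureReal_def, Measure.restrict_apply_univ, Real.volume_Ioo,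
      ENNReal.toReal_ofReal (sub_nonneg.2 (hp.pos m 0).le)] at this
    calc ‖∫ t, x t ∂(volume.restrict (Set.Ioo 0 (p m 0)))‖ ≤ C * (p m 0 - 0) := this
      _ ≤ C/((m:ℝ)+1) := by
        have h1 := (hp m 0).2
        simp only [Nat.cast_zero] at h1
        have : p m 0 ≤ 1/((m:ℝ)+1) := by
          have : ((0:ℝ)+1)/((m:ℝ)+1) = 1/((m:ℝ)+1) := by norm_num
          linarith
        calc C * (p m 0 - 0) = C * p m 0 := by ring
          _ ≤ C * (1/((m:ℝ)+1)) := mul_le_mul_of_nonneg_left this hC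
          _ = C/((m:ℝ)+1) := by ring
  have hE2b : ∀ m, ‖E2 m‖ ≤ C/((m:ℝ)+1) := by
    intro m
    have hs1 : Set.Ici (p m m) ∩ Set.Ioc (0:ℝ) 1 = Set.Icc (p m m) 1 := by
      ext t
      constructor
      · rintro ⟨h1, _, h3⟩; exact ⟨h1, h3⟩
      · rintro ⟨h1, h2⟩; exact ⟨h1, lt_of_lt_of_le (hp.pos m m) h1, h2⟩
    have heq : E2 m = ∫ t, x t ∂(volume.restrict (Set.Icc (p m m) 1)) := by
      rw [hE2def]
      simp only
      rw [MeasureTheory.integral_indicator measurableSet_Ici, hμ,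
        Measure.restrict_restrict measurableSet_Ici, hs1]
    rw [heq]
    haveI : IsFiniteMeasure (volume.restrict (Set.Icc (p m m) (1:ℝ))) := ⟨by
      rw [Measure.restrict_apply_univ, Real.volume_Icc]
      exact ENNReal.ofReal_lt_top⟩
    have hb : ∀ᵐ t ∂(volume.restrict (Set.Icc (p m m) (1:ℝ))), ‖x t‖ ≤ C := by
      filter_upwards [ae_restrict_mem measurableSet_Icc] with t ht
      exact hxbdd t ⟨le_trans (hp.pos m m).le ht.1, ht.2⟩
    have := MeasureTheory.norm_integral_le_of_norm_le_const hb
    rw [measureReal_def, Measure.restrict_apply_univ, Real.volume_Icc,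
      ENNReal.toReal_ofReal (sub_nonneg.2 (hp.lt_one (le_refl m)).le)] at this
    calc ‖∫ t, x t ∂(volume.restrict (Set.Icc (p m m) 1))‖ ≤ C * (1 - p m m) := this
      _ ≤ C/((m:ℝ)+1) := by
        have h1 := (hp m m).1
        have h2 : (m:ℝ)/((m:ℝ)+1) = 1 - 1/((m:ℝ)+1) := by field_simp; ring
        have : 1 - p m m ≤ 1/((m:ℝ)+1) := by linarith
        calc C * (1 - p m m) ≤ C * (1/((m:ℝ)+1)) := mul_le_mul_of_nonneg_left this hC
          _ = C/((m:ℝ)+1) := by ring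
  have hlim0 : Tendsto (fun m : ℕ => C/((m:ℝ)+1)) atTop (nhds 0) := by
    have := tendsto_one_div_add_atTop_nhds_zero_nat.const_mul C
    simpa [div_eq_mul_inv] using this
  have hE1t : Tendsto E1 atTop (nhds 0) := squeeze_zero_norm hE1b hlim0
  have hE2t : Tendsto E2 atTop (nhds 0) := squeeze_zero_norm hE2b hlim0
  have hfinal := (hdct.sub hE1t).sub hE2t
  rw [sub_zero, sub_zero] at hfinal
  have heqf : (fun m => ∑ i ∈ Finset.range m, (p m (i+1) - p m i) * auxS x p m i)
      = fun m => (∫ t, auxg x p m t ∂μ) - E1 m - E2 m := by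
    funext m
    rw [hgint m]; ring
  rw [heqf, intervalIntegral.integral_of_le zero_le_one]
  exact hfinal


lemma aux_upper (xs : ℕ → ℝ → ℝ) (x : ℝ → ℝ) (C : ℝ)
    (hbdd : ∀ n, ∀ t ∈ Set.Icc (0 : ℝ) 1, |xs n t| ≤ C)
    (hxbdd : ∀ t ∈ Set.Icc (0 : ℝ) 1, |x t| ≤ C)
    (hint : ∀ n, IntervalIntegrable (xs n) MeasureTheory.volume 0 1)
    (hxint : IntervalIntegrable x MeasureTheory.volume 0 1)
    (hcount : Set.Countable {t ∈ Set.Icc (0 : ℝ) 1 | ¬ContinuousAt x t})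
    (hsup : ∀ t₁ t₂ : ℝ, 0 ≤ t₁ → t₁ < t₂ → t₂ ≤ 1 →
      ContinuousAt x t₁ → ContinuousAt x t₂ →
      Tendsto (fun n => sSup (xs n '' Set.Icc t₁ t₂)) atTop (nhds (sSup (x '' Set.Icc t₁ t₂))))
    {ε : ℝ} (hε : 0 < ε) :
    ∀ᶠ n in atTop, (∫ t in (0:ℝ)..1, xs n t) ≤ (∫ t in (0:ℝ)..1, x t) + ε := by
  classical
  have hex : ∀ m i : ℕ, ∃ c, c ∈ Set.Ioo ((i:ℝ)/((m:ℝ)+1)) (((i:ℝ)+1)/((m:ℝ)+1))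
      ∧ (c ∈ Set.Icc (0:ℝ) 1 → ContinuousAt x c) := by
    intro m i
    obtain ⟨c, hc, hcD⟩ := aux_dense _ hcount ((i:ℝ)/((m:ℝ)+1)) (((i:ℝ)+1)/((m:ℝ)+1))
      ((div_lt_div_iff_of_pos_right (by positivity)).2 (by linarith))
    exact ⟨c, hc, fun hmem => by by_contra h; exact hcD ⟨hmem, h⟩⟩
  choose p hpmem hpcont using hex
  have hp : pgood p := hpmem
  have hC : 0 ≤ C := le_trans (abs_nonneg _) (hxbdd 0 ⟨le_rfl, zero_le_one⟩)
  have hdar := aux_darboux x C hxbdd hxint hcount p hp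
  have hsmall : Tendsto (fun m : ℕ => 2*C/((m:ℝ)+1)) atTop (nhds 0) := by
    have := tendsto_one_div_add_atTop_nhds_zero_nat.const_mul (2*C)
    simpa [div_eq_mul_inv, mul_comm] using this
  have hev1 := hdar.eventually (gt_mem_nhds (by linarith :
    (∫ t in (0:ℝ)..1, x t) < (∫ t in (0:ℝ)..1, x t) + ε/2))
  have hev2 := hsmall.eventually (gt_mem_nhds (by linarith : (0:ℝ) < ε/4))
  obtain ⟨m, hm1, hm2⟩ := (hev1.and hev2).exists
  have hsupm : Tendsto (fun n => ∑ i ∈ Finset.range m,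
      (p m (i+1) - p m i) * sSup (xs n '' Set.Icc (p m i) (p m (i+1)))) atTop
      (nhds (∑ i ∈ Finset.range m, (p m (i+1) - p m i) * auxS x p m i)) := by
    apply tendsto_finset_sum
    intro i hi
    have hi' : i + 1 ≤ m := Finset.mem_range.1 hi
    exact ((hsup (p m i) (p m (i+1)) (hp.pos m i).le (hp.mono m (Nat.lt_succ_self i))
      (hp.lt_one hi').le
      (hpcont m i ⟨(hp.pos m i).le, (hp.lt_one (le_trans (Nat.le_succ i) hi')).le⟩)
      (hpcont m (i+1) ⟨(hp.pos m (i+1)).le, (hp.lt_one hi').le⟩))).const_mul _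
  have hevn := hsupm.eventually (gt_mem_nhds (by linarith :
    (∑ i ∈ Finset.range m, (p m (i+1) - p m i) * auxS x p m i)
      < (∑ i ∈ Finset.range m, (p m (i+1) - p m i) * auxS x p m i) + ε/4))
  filter_upwards [hevn] with n hn
  have hle := aux_integral_le (xs n) C (hbdd n) (hint n) m (p m) (hp.pos m 0)
    (hp.lt_one le_rfl).le (fun i _ => hp.mono m (Nat.lt_succ_self i))
  have hb1 : p m 0 ≤ 1/((m:ℝ)+1) := by
    have h1 := (hp m 0).2
    simp only [Nat.cast_zero] at h1
    have h2 : ((0:ℝ)+1)/((m:ℝ)+1) = 1/((m:ℝ)+1) := by norm_num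
    linarith
  have hb2 : 1 - p m m ≤ 1/((m:ℝ)+1) := by
    have h1 := (hp m m).1
    have h2 : (m:ℝ)/((m:ℝ)+1) = 1 - 1/((m:ℝ)+1) := by field_simp; ring
    linarith
  have hc1 : C * p m 0 ≤ C * (1/((m:ℝ)+1)) := mul_le_mul_of_nonneg_left hb1 hC
  have hc2 : C * (1 - p m m) ≤ C * (1/((m:ℝ)+1)) := mul_le_mul_of_nonneg_left hb2 hC
  have hcc : C * (1/((m:ℝ)+1)) + C * (1/((m:ℝ)+1)) = 2*C/((m:ℝ)+1) := by ring
  have hS : ∀ i, auxS (xs n) (fun _ j => p m j) m i = sSup (xs n '' Set.Icc (p m i) (p m (i+1))) :=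
    fun i => rfl
  unfold auxS at *
  linarith [hle, hn, hm1.le, hm2.le]

/-- Integration is continuous with respect to Skorokhod `M₂` convergence: if bounded
Riemann-integrable `x_n` converge to `x` (with at most countably many discontinuities) in
the sense that suprema and infima over subintervals with endpoints at continuity points of
`x` converge, then `∫_0^1 x_n → ∫_0^1 x`. -/
theorem stmt_10 (xs : ℕ → ℝ → ℝ) (x : ℝ → ℝ) (C : ℝ)
    (hbdd : ∀ n, ∀ t ∈ Set.Icc (0 : ℝ) 1, |xs n t| ≤ C)
    (hxbdd : ∀ t ∈ Set.Icc (0 : ℝ) 1, |x t| ≤ C)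
    (hint : ∀ n, IntervalIntegrable (xs n) MeasureTheory.volume 0 1)
    (hxint : IntervalIntegrable x MeasureTheory.volume 0 1)
    (hcount : Set.Countable {t ∈ Set.Icc (0 : ℝ) 1 | ¬ContinuousAt x t})
    (hsup : ∀ t₁ t₂ : ℝ, 0 ≤ t₁ → t₁ < t₂ → t₂ ≤ 1 →
      ContinuousAt x t₁ → ContinuousAt x t₂ →
      Tendsto (fun n => sSup (xs n '' Set.Icc t₁ t₂)) atTop (nhds (sSup (x '' Set.Icc t₁ t₂))))
    (hinf : ∀ t₁ t₂ : ℝ, 0 ≤ t₁ → t₁ < t₂ → t₂ ≤ 1 →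
      ContinuousAt x t₁ → ContinuousAt x t₂ →
      Tendsto (fun n => sInf (xs n '' Set.Icc t₁ t₂)) atTop (nhds (sInf (x '' Set.Icc t₁ t₂)))) :
    Tendsto (fun n => ∫ t in (0 : ℝ)..1, xs n t) atTop (nhds (∫ t in (0 : ℝ)..1, x t)) := by
  have himg : ∀ (f : ℝ → ℝ) (I : Set ℝ), (fun t => -(f t)) '' I = -(f '' I) := by
    intro f I
    ext y
    simp only [Set.mem_image, Set.mem_neg]
    constructor
    · rintro ⟨t, ht, rfl⟩; exact ⟨t, ht, by ring⟩
    · rintro ⟨t, ht, h⟩; exact ⟨t, ht, by rw [h]; ring⟩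
  have hsSupneg : ∀ s : Set ℝ, sSup (-s) = -sInf s := by
    intro s; rw [Real.sInf_def, neg_neg]
  have hcontneg : ∀ t, ContinuousAt (fun s => -(x s)) t ↔ ContinuousAt x t := by
    intro t
    constructor
    · intro h; convert h.neg using 1; funext s; simp
    · intro h; exact h.neg
  have hupper : ∀ ε : ℝ, 0 < ε → ∀ᶠ n in atTop,
      (∫ t in (0:ℝ)..1, xs n t) ≤ (∫ t in (0:ℝ)..1, x t) + ε :=
    fun ε hε => aux_upper xs x C hbdd hxbdd hint hxint hcount hsup hε
  have hlower : ∀ ε : ℝ, 0 < ε → ∀ᶠ n in atTop,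
      (∫ t in (0:ℝ)..1, x t) - ε ≤ (∫ t in (0:ℝ)..1, xs n t) := by
    intro ε hε
    have h := aux_upper (fun n t => -(xs n t)) (fun t => -(x t)) C
      (fun n t ht => by rw [abs_neg]; exact hbdd n t ht)
      (fun t ht => by rw [abs_neg]; exact hxbdd t ht)
      (fun n => (hint n).neg) hxint.neg
      (by
        have : {t ∈ Set.Icc (0 : ℝ) 1 | ¬ContinuousAt (fun s => -(x s)) t}
            = {t ∈ Set.Icc (0 : ℝ) 1 | ¬ContinuousAt x t} := by
          ext t; simp [hcontneg t]
        rw [this]; exact hcount)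
      (by
        intro t₁ t₂ h0 h12 h1 hc1 hc2
        rw [(hcontneg t₁)] at hc1
        rw [(hcontneg t₂)] at hc2
        have := (hinf t₁ t₂ h0 h12 h1 hc1 hc2).neg
        simp only [himg, hsSupneg]
        exact this) hε
    filter_upwards [h] with n hn
    rw [intervalIntegral.integral_neg, intervalIntegral.integral_neg] at hn
    linarith
  rw [tendsto_order]
  constructor
  · intro c hc
    have hε : 0 < ((∫ t in (0:ℝ)..1, x t) - c)/2 := by linarith
    filter_upwards [hlower _ hε] with n hn
    linarith
  · intro c hc
    have hε : 0 < (c - (∫ t in (0:ℝ)..1, x t))/2 := by linarith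
    filter_upwards [hupper _ hε] with n hn
    linarith
end

section
/- Let (x_n) ⊂ ℝ be a sequence such that every subsequence has a further subsequence converging to x. Then x_n → x. Probabilistic version: if F̂_n(x) → F(x) in probability for every x ∈ ℝ with F continuous, then sup_x |F̂_n(x) − F(x)| → 0 in probability. -/
open MeasureTheory Filter


lemma polya_upper {F G : ℝ → ℝ} (hG : Monotone G) (hG1 : ∀ x, G x ≤ 1)
    (hF : Monotone F) (hF0 : ∀ x, 0 ≤ F x)
    {m : ℕ} (hm : 2 ≤ m) {δ : ℝ} (hδ : 0 ≤ δ) (a : ℕ → ℝ)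
    (ha : ∀ i, 1 ≤ i → i ≤ m - 1 → F (a i) = i / m)
    (hd : ∀ i, 1 ≤ i → i ≤ m - 1 → G (a i) - F (a i) ≤ δ)
    (x : ℝ) : G x - F x ≤ δ + 1 / m := by
  classical
  have hm0 : (0:ℝ) < m := by positivity
  by_cases h : ∃ i, (1 ≤ i ∧ i ≤ m - 1) ∧ x < a i
  · set j := Nat.find h with hj
    obtain ⟨⟨hj1, hj2⟩, hjx⟩ := Nat.find_spec h
    have hGx : G x ≤ (j:ℝ)/m + δ := by
      have h1 := hG hjx.le
      have h2 := hd j hj1 hj2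
      have h3 := ha j hj1 hj2
      linarith
    have hFx : ((j:ℝ) - 1)/m ≤ F x := by
      rcases eq_or_lt_of_le hj1 with h1 | h1
      · have hz : ((j:ℝ) - 1) = 0 := by rw [hj, ← h1]; norm_num
        rw [hz]
        simpa using hF0 x
      · have hmin := Nat.find_min h (show j - 1 < j by omega)
        push_neg at hmin
        have hax : a (j-1) ≤ x := hmin ⟨by omega, by omega⟩
        have := hF hax
        rw [ha (j-1) (by omega) (by omega)] at this
        have hcast : ((j - 1 : ℕ) : ℝ) = (j:ℝ) - 1 := by
          push_cast [Nat.cast_sub (by omega : 1 ≤ j)]; ring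
        rw [hcast] at this
        exact this
    have key : (j:ℝ)/m - ((j:ℝ)-1)/m = 1/m := by rw [div_sub_div_same]; norm_num
    linarith
  · push_neg at h
    have hax : a (m-1) ≤ x := h (m-1) ⟨by omega, le_refl _⟩
    have hFx : 1 - 1/m ≤ F x := by
      have := hF hax
      rw [ha (m-1) (by omega) (le_refl _)] at this
      have hcast : ((m - 1 : ℕ) : ℝ) / m = 1 - 1/m := by
        rw [Nat.cast_sub (by omega : 1 ≤ m)]
        field_simp
        norm_num
      rw [hcast] at this
      exact this
    have := hG1 x
    linarith

lemma polya_abs {F G : ℝ → ℝ} (hG : Monotone G) (hG0 : ∀ x, 0 ≤ G x) (hG1 : ∀ x, G x ≤ 1)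
    (hF : Monotone F) (hF0 : ∀ x, 0 ≤ F x) (hF1 : ∀ x, F x ≤ 1)
    {m : ℕ} (hm : 2 ≤ m) {δ : ℝ} (hδ : 0 ≤ δ) (a : ℕ → ℝ)
    (ha : ∀ i, 1 ≤ i → i ≤ m - 1 → F (a i) = i / m)
    (hd : ∀ i, 1 ≤ i → i ≤ m - 1 → |G (a i) - F (a i)| ≤ δ)
    (x : ℝ) : |G x - F x| ≤ δ + 1 / m := by
  rw [abs_sub_le_iff]
  constructor
  · exact polya_upper hG hG1 hF hF0 hm hδ a ha
      (fun i h1 h2 => (abs_le.mp (hd i h1 h2)).2) x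
  · have := polya_upper (G := fun y => 1 - G (-y)) (F := fun y => 1 - F (-y))
      (fun y z hyz => by simp only; have := hG (neg_le_neg hyz); linarith)
      (fun y => by have := hG0 (-y); linarith)
      (fun y z hyz => by simp only; have := hF (neg_le_neg hyz); linarith)
      (fun y => by have := hF1 (-y); linarith)
      hm hδ (fun i => -(a (m - i)))
      (fun i h1 h2 => by
        have h3 : 1 ≤ m - i := by omega
        have h4 : m - i ≤ m - 1 := by omega
        simp only [neg_neg]
        rw [ha (m - i) h3 h4]
        have hm0 : (0:ℝ) < m := by positivity
        rw [Nat.cast_sub (by omega : i ≤ m)]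
        field_simp
        ring)
      (fun i h1 h2 => by
        have h3 : 1 ≤ m - i := by omega
        have h4 : m - i ≤ m - 1 := by omega
        have := (abs_le.mp (hd (m - i) h3 h4)).1
        simp only [neg_neg]
        linarith)
      (-x)
    simp only [neg_neg] at this
    linarith

/-- Probabilistic Pólya theorem via the subsequence principle: if `F̂_n` are random CDFs,
`F` is a deterministic continuous CDF, and `F̂_n(x) → F(x)` in probability for every `x`,
then `sup_x |F̂_n(x) − F(x)| → 0` in probability. -/
theorem stmt_18 {Ω : Type*} [MeasurableSpace Ω] (μ : Measure Ω) [IsProbabilityMeasure μ]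
    (Fh : ℕ → Ω → ℝ → ℝ) (F : ℝ → ℝ)
    (hmeas : ∀ n x, Measurable (fun ω => Fh n ω x))
    (hmono : ∀ n ω, Monotone (Fh n ω))
    (hbdd : ∀ n ω x, Fh n ω x ∈ Set.Icc (0 : ℝ) 1)
    (hFmono : Monotone F) (hFcont : Continuous F)
    (hFbot : Tendsto F atBot (nhds 0)) (hFtop : Tendsto F atTop (nhds 1))
    (hconv : ∀ x : ℝ, ∀ ε : ℝ, 0 < ε →
      Tendsto (fun n => μ {ω | ε < |Fh n ω x - F x|}) atTop (nhds 0)) :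
    ∀ ε : ℝ, 0 < ε →
      Tendsto (fun n => μ {ω | ε < ⨆ x : ℝ, |Fh n ω x - F x|}) atTop (nhds 0) := by
  intro ε hε
  have hδ : (0:ℝ) < ε/2 := by linarith
  set m : ℕ := max 2 (⌈2/ε⌉₊ + 1) with hm_def
  have hm2 : 2 ≤ m := le_max_left _ _
  have hm0 : (0:ℝ) < m := by positivity
  have hminv : (1:ℝ)/m < ε/2 := by
    have h1 : (2/ε : ℝ) < m := by
      have h2 : (2/ε : ℝ) ≤ ⌈2/ε⌉₊ := Nat.le_ceil _
      have h3 : (⌈2/ε⌉₊ + 1 : ℕ) ≤ m := le_max_right _ _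
      have h4 : ((⌈2/ε⌉₊ : ℝ) + 1) ≤ m := by exact_mod_cast h3
      linarith
    rw [div_lt_div_iff₀ hm0 (by norm_num : (0:ℝ) < 2)]
    rw [div_lt_iff₀ hε] at h1
    nlinarith
  clear hm_def
  clear_value m
  -- bounds for F
  have hF0 : ∀ x, 0 ≤ F x := fun x =>
    le_of_tendsto hFbot (eventually_atBot.mpr ⟨x, fun y hy => hFmono hy⟩)
  have hF1 : ∀ x, F x ≤ 1 := fun x =>
    ge_of_tendsto hFtop (eventually_atTop.mpr ⟨x, fun y hy => hFmono hy⟩)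
  -- quantile points
  have hex : ∀ i : ℕ, ∃ x, (1 ≤ i → i ≤ m - 1 → F x = i / m) := by
    intro i
    by_cases hi : 1 ≤ i ∧ i ≤ m - 1
    · obtain ⟨hi1, hi2⟩ := hi
      have hc0 : (0:ℝ) < i / m := by
        apply div_pos _ hm0
        exact_mod_cast Nat.cast_pos.mpr (by omega)
      have hc1 : (i:ℝ) / m < 1 := by
        rw [div_lt_one hm0]
        exact_mod_cast Nat.cast_lt.mpr (by omega)
      obtain ⟨x₁, hx₁⟩ := (hFbot.eventually (eventually_lt_nhds hc0)).exists
      obtain ⟨x₂, hx₂⟩ := (hFtop.eventually (eventually_gt_nhds hc1)).exists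
      have hFu : F (min x₁ x₂) ≤ (i:ℝ)/m := (hFmono (min_le_left _ _)).trans hx₁.le
      have hFv : (i:ℝ)/m ≤ F (max x₁ x₂) := hx₂.le.trans (hFmono (le_max_right _ _))
      have := intermediate_value_Icc (min_le_max (a := x₁) (b := x₂)) hFcont.continuousOn
      obtain ⟨x, _, hx⟩ := this ⟨hFu, hFv⟩
      exact ⟨x, fun _ _ => hx⟩
    · exact ⟨0, fun h1 h2 => absurd ⟨h1, h2⟩ hi⟩
  choose a ha using hex
  -- inclusion of events
  have hsub : ∀ n, {ω | ε < ⨆ x : ℝ, |Fh n ω x - F x|} ⊆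
      ⋃ i ∈ Finset.Icc 1 (m-1), {ω | ε/2 < |Fh n ω (a i) - F (a i)|} := by
    intro n ω hω
    by_contra hc
    simp only [Set.mem_iUnion, Set.mem_setOf_eq, not_exists, not_lt] at hc
    have hb : ∀ x, |Fh n ω x - F x| ≤ ε/2 + 1/m := by
      apply polya_abs (hmono n ω) (fun x => (hbdd n ω x).1) (fun x => (hbdd n ω x).2)
        hFmono hF0 hF1 hm2 hδ.le a ha
      intro i h1 h2
      exact hc i (Finset.mem_Icc.mpr ⟨h1, h2⟩)
    have hsup : (⨆ x : ℝ, |Fh n ω x - F x|) ≤ ε/2 + 1/m := ciSup_le hb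
    have := hω
    simp only [Set.mem_setOf_eq] at this
    linarith
  have hle : ∀ n, μ {ω | ε < ⨆ x : ℝ, |Fh n ω x - F x|} ≤
      ∑ i ∈ Finset.Icc 1 (m-1), μ {ω | ε/2 < |Fh n ω (a i) - F (a i)|} :=
    fun n => (measure_mono (hsub n)).trans (measure_biUnion_finset_le _ _)
  have hsum : Tendsto (fun n => ∑ i ∈ Finset.Icc 1 (m-1),
      μ {ω | ε/2 < |Fh n ω (a i) - F (a i)|}) atTop (nhds 0) := by
    have := tendsto_finset_sum (Finset.Icc 1 (m-1))
      (fun i _ => hconv (a i) (ε/2) hδ)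
    simpa using this
  exact tendsto_of_tendsto_of_tendsto_of_le_of_le tendsto_const_nhds hsum
    (fun n => zero_le) hle
end
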